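/- For each positive integer n, there is a list containing each binary partition of n exactly once, in which every two consecutive partitions differ by a single elementary move, whose first entry is the partition of n into n parts each equal to 1, and in which the partitions having at least one part equal to 1 form an initial segment of the list (all partitions containing a part 1 precede all partitions not containing a part 1). -/

import Mathlib

def IsBinaryPartition (P : Multiset ℕ) : Prop := ∀ p ∈ P, ∃ k : ℕ, p = 2 ^ k

def ElementaryMove (P Q : Multiset ℕ) : Prop :=
  ∃ k : ℕ, Q + {2 ^ k, 2 ^ k} = P + {2 ^ (k + 1)} ∨ P + {2 ^ k, 2 ^ k} = Q + {2 ^ (k + 1)}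

namespace GrayAux

def dbl (P : Multiset ℕ) : Multiset ℕ := P.map (fun x => 2 * x)

lemma pair_eq (a : ℕ) : ({a, a} : Multiset ℕ) = {a} + {a} := by
  rw [Multiset.insert_eq_cons, ← Multiset.singleton_add]

lemma em_symm {P Q : Multiset ℕ} (h : ElementaryMove P Q) : ElementaryMove Q P := by
  obtain ⟨k, h | h⟩ := h
  · exact ⟨k, Or.inr h⟩
  · exact ⟨k, Or.inl h⟩

lemma em_add_right {P Q : Multiset ℕ} (R : Multiset ℕ) (h : ElementaryMove P Q) :
    ElementaryMove (P + R) (Q + R) := by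
  obtain ⟨k, h | h⟩ := h
  · exact ⟨k, Or.inl (by rw [add_right_comm, h, add_right_comm])⟩
  · exact ⟨k, Or.inr (by rw [add_right_comm, h, add_right_comm])⟩

lemma dbl_add (P Q : Multiset ℕ) : dbl (P + Q) = dbl P + dbl Q := Multiset.map_add _ _ _

lemma dbl_pair (k : ℕ) : dbl ({2 ^ k, 2 ^ k} : Multiset ℕ) = {2 ^ (k+1), 2 ^ (k+1)} := by
  simp [dbl, Multiset.insert_eq_cons, pow_succ, mul_comm]

lemma dbl_singleton (a : ℕ) : dbl ({a} : Multiset ℕ) = {2 * a} := Multiset.map_singleton _ _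

lemma em_dbl {P Q : Multiset ℕ} (h : ElementaryMove P Q) : ElementaryMove (dbl P) (dbl Q) := by
  obtain ⟨k, h | h⟩ := h
  · refine ⟨k + 1, Or.inl ?_⟩
    have := congrArg dbl h
    rwa [dbl_add, dbl_add, dbl_pair, dbl_singleton, show 2 * 2 ^ (k+1) = 2 ^ (k+1+1) by ring] at this
  · refine ⟨k + 1, Or.inr ?_⟩
    have := congrArg dbl h
    rwa [dbl_add, dbl_add, dbl_pair, dbl_singleton, show 2 * 2 ^ (k+1) = 2 ^ (k+1+1) by ring] at this

lemma dbl_sum (P : Multiset ℕ) : (dbl P).sum = 2 * P.sum := by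
  induction P using Multiset.induction_on with
  | empty => simp [dbl]
  | cons a s ih => simp [dbl] at ih ⊢; omega

lemma one_mem_of_odd {P : Multiset ℕ} (hb : IsBinaryPartition P) (h : ¬ 2 ∣ P.sum) :
    (1 : ℕ) ∈ P := by
  by_contra h1
  apply h
  refine Multiset.dvd_sum (fun x hx => ?_)
  obtain ⟨k, rfl⟩ := hb x hx
  match k with
  | 0 => exact absurd hx h1
  | j+1 => exact Dvd.intro (2 ^ j) (by ring)

def L : ℕ → List (Multiset ℕ)
  | 0 => [0]
  | (n+1) =>
    if (n+1) % 2 = 1 then (L n).map (· + {1})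
    else
      (L n).map (· + {1}) ++
        (if ((n+1)/2) % 2 = 0 then (L ((n+1)/2)).map dbl
         else ((L ((n+1)/2)).map dbl).reverse)
  decreasing_by all_goals omega

def T : ℕ → Multiset ℕ
  | 0 => 0
  | (n+1) =>
    if (n+1) % 2 = 1 then T n + {1}
    else if ((n+1)/2) % 2 = 0 then dbl (T ((n+1)/2))
    else Multiset.replicate ((n+1)/2) 2
  decreasing_by all_goals omega

lemma T_zero : T 0 = 0 := by rw [T]

lemma T_odd {k : ℕ} (h : k % 2 = 1) : T k = T (k-1) + {1} := by
  match k with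
  | 0 => omega
  | m+1 => rw [T]; simp [h]

lemma T_ee {k : ℕ} (h : k % 2 = 0) (h2 : (k/2) % 2 = 0) : T k = dbl (T (k/2)) := by
  match k with
  | 0 => rw [T_zero]; rfl
  | m+1 => rw [T]; simp [show ¬ ((m+1) % 2 = 1) by omega, h2]

lemma T_eo {k : ℕ} (h : k % 2 = 0) (h2 : (k/2) % 2 = 1) : T k = Multiset.replicate (k/2) 2 := by
  match k with
  | 0 => omega
  | m+1 => rw [T]; simp [show ¬ ((m+1) % 2 = 1) by omega, show ¬ ((m+1)/2 % 2 = 0) by omega]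

/-- membership characterization of the `+ {1}` block -/
lemma mem_map_one_iff {m : ℕ} {l : List (Multiset ℕ)}
    (hl : ∀ P, P ∈ l ↔ P.sum = m ∧ IsBinaryPartition P) (P : Multiset ℕ) :
    P ∈ l.map (· + {1}) ↔ P.sum = m + 1 ∧ IsBinaryPartition P ∧ (1:ℕ) ∈ P := by
  constructor
  · rintro hmem
    obtain ⟨Q, hQ, rfl⟩ := List.mem_map.1 hmem
    obtain ⟨hs, hb⟩ := (hl Q).1 hQ
    refine ⟨by simp [hs], ?_, by simp⟩
    intro p hp
    rcases Multiset.mem_add.1 hp with h | h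
    · exact hb p h
    · exact ⟨0, by simpa using h⟩
  · rintro ⟨hs, hb, h1⟩
    have hP : P.erase 1 + {1} = P := by
      rw [add_comm, Multiset.singleton_add, Multiset.cons_erase h1]
    refine List.mem_map.2 ⟨P.erase 1, (hl _).2 ⟨?_, ?_⟩, hP⟩
    · have := congrArg Multiset.sum hP
      simp at this; omega
    · intro p hp
      exact hb p (Multiset.mem_of_le (Multiset.erase_le 1 P) hp)

/-- membership characterization of the doubled block -/
lemma mem_map_dbl_iff {m : ℕ} {l : List (Multiset ℕ)}
    (hl : ∀ P, P ∈ l ↔ P.sum = m ∧ IsBinaryPartition P) (P : Multiset ℕ) :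
    P ∈ l.map dbl ↔ P.sum = 2 * m ∧ IsBinaryPartition P ∧ (1:ℕ) ∉ P := by
  constructor
  · rintro hmem
    obtain ⟨Q, hQ, rfl⟩ := List.mem_map.1 hmem
    obtain ⟨hs, hb⟩ := (hl Q).1 hQ
    refine ⟨by rw [dbl_sum, hs], ?_, ?_⟩
    · intro p hp
      obtain ⟨q, hq, rfl⟩ := Multiset.mem_map.1 hp
      obtain ⟨k, rfl⟩ := hb q hq
      exact ⟨k+1, by ring⟩
    · intro hc
      obtain ⟨q, hq, hq1⟩ := Multiset.mem_map.1 hc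
      omega
  · rintro ⟨hs, hb, h1⟩
    have key : dbl (P.map (· / 2)) = P := by
      rw [dbl, Multiset.map_map]
      rw [show P = P.map id from (Multiset.map_id P).symm]
      rw [Multiset.map_map]
      refine Multiset.map_congr rfl (fun x hx => ?_)
      obtain ⟨k, rfl⟩ := hb x (by simpa using hx)
      match k with
      | 0 => exact absurd (by simpa using hx) h1
      | j+1 => simp [pow_succ, Nat.mul_div_cancel_left, mul_comm]
    refine List.mem_map.2 ⟨P.map (· / 2), (hl _).2 ⟨?_, ?_⟩, key⟩
    · have := congrArg Multiset.sum key
      rw [dbl_sum, hs] at this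
      omega
    · intro p hp
      obtain ⟨x, hx, rfl⟩ := Multiset.mem_map.1 hp
      obtain ⟨k, rfl⟩ := hb x hx
      match k with
      | 0 => exact absurd hx h1
      | j+1 => exact ⟨j, by simp [pow_succ, Nat.mul_div_cancel_left, mul_comm]⟩

def Good (n : ℕ) : Prop :=
  (L n).Nodup ∧
  (∀ P : Multiset ℕ, P ∈ L n ↔ P.sum = n ∧ IsBinaryPartition P) ∧
  (L n).Chain' ElementaryMove ∧
  (L n).head? = some (Multiset.replicate n 1) ∧
  (L n).getLast? = some (T n) ∧
  ∃ A C : List (Multiset ℕ), L n = A ++ C ∧ (∀ P ∈ A, (1:ℕ) ∈ P) ∧ (∀ P ∈ C, (1:ℕ) ∉ P)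

lemma good (n : ℕ) : Good n := by
  induction n using Nat.strong_induction_on with
  | _ n IH =>
  match n with
  | 0 =>
    have hL0 : L 0 = [0] := by rw [L]
    refine ⟨by simp [hL0], ?_, by simp [hL0, List.Chain'], by simp [hL0], by simp [hL0, T_zero], [], [0], by simp [hL0], by simp, by simp⟩
    · intro P
      rw [hL0]
      simp only [List.mem_singleton]
      constructor
      · rintro rfl; exact ⟨rfl, by intro p hp; simp at hp⟩
      · rintro ⟨hs, hb⟩
        refine Multiset.eq_zero_of_forall_notMem (fun x hx => ?_)
        obtain ⟨k, rfl⟩ := hb x hx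
        have := Multiset.single_le_sum (fun y _ => Nat.zero_le y) _ hx
        have : 0 < 2 ^ k := Nat.pow_pos (by norm_num)
        omega
  | (m+1) =>
    obtain ⟨ndm, memm, chm, hdm, glm, -⟩ := IH m (by omega)
    have ndA : ((L m).map (· + {1})).Nodup := ndm.map (add_left_injective {1})
    have memA : ∀ P, P ∈ (L m).map (· + {1}) ↔
        P.sum = m + 1 ∧ IsBinaryPartition P ∧ (1:ℕ) ∈ P := mem_map_one_iff memm
    have chA : ((L m).map (· + {1})).Chain' ElementaryMove :=
      (List.isChain_map _).2 (chm.imp fun a b h => em_add_right {1} h)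
    have hdA : ((L m).map (· + {1})).head? = some (Multiset.replicate (m+1) 1) := by
      rw [List.head?_map, hdm]
      simp only [Option.map_some]
      congr 1
      rw [add_comm, Multiset.singleton_add, Multiset.replicate_succ]
    have glA : ((L m).map (· + {1})).getLast? = some (T m + {1}) := by
      rw [List.getLast?_map, glm]; rfl
    have AllA : ∀ P ∈ (L m).map (· + {1}), (1:ℕ) ∈ P := fun P hP => ((memA P).1 hP).2.2
    by_cases hodd : (m+1) % 2 = 1
    · -- odd case
      have hL : L (m+1) = (L m).map (· + {1}) := by rw [L, if_pos hodd]
      refine ⟨hL ▸ ndA, ?_, hL ▸ chA, hL ▸ hdA, ?_,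
        (L m).map (· + {1}), [], by simp [hL], AllA, by simp⟩
      · intro P
        rw [hL, memA]
        constructor
        · rintro ⟨hs, hb, -⟩; exact ⟨hs, hb⟩
        · rintro ⟨hs, hb⟩
          exact ⟨hs, hb, one_mem_of_odd hb (by omega)⟩
      · rw [hL, glA, T_odd hodd]
        simp
    · -- even case
      have hev : (m+1) % 2 = 0 := by omega
      have hmodd : m % 2 = 1 := by omega
      obtain ⟨h, hm2⟩ : ∃ h, m + 1 = 2 * h := ⟨(m+1)/2, by omega⟩
      have hdiv : (m+1)/2 = h := by omega
      have hpos : 1 ≤ h := by omega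
      obtain ⟨ndh, memh, chh, hdh, glh, -⟩ := IH h (by omega)
      have ndC0 : ((L h).map dbl).Nodup :=
        ndh.map (Multiset.map_injective (fun a b hab => by omega))
      have memC0 : ∀ P, P ∈ (L h).map dbl ↔
          P.sum = m + 1 ∧ IsBinaryPartition P ∧ (1:ℕ) ∉ P := by
        intro P
        rw [mem_map_dbl_iff memh, ← hm2]
      have chC0 : ((L h).map dbl).Chain' ElementaryMove :=
        (List.isChain_map _).2 (chh.imp fun a b hab => em_dbl hab)
      have hdC0 : ((L h).map dbl).head? = some (Multiset.replicate h 2) := by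
        rw [List.head?_map, hdh]
        simp [dbl, Multiset.map_replicate]
      have glC0 : ((L h).map dbl).getLast? = some (dbl (T h)) := by
        rw [List.getLast?_map, glh]; rfl
      set C : List (Multiset ℕ) := if h % 2 = 0 then (L h).map dbl
        else ((L h).map dbl).reverse with hC
      have ndC : C.Nodup := by
        rw [hC]; split
        · exact ndC0
        · exact List.nodup_reverse.2 ndC0
      have memC : ∀ P, P ∈ C ↔ P.sum = m + 1 ∧ IsBinaryPartition P ∧ (1:ℕ) ∉ P := by
        intro P
        rw [hC]; split
        · exact memC0 P
        · rw [List.mem_reverse]; exact memC0 P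
      have chC : C.Chain' ElementaryMove := by
        rw [hC]; split
        · exact chC0
        · rw [List.Chain', List.isChain_reverse]
          exact chC0.imp fun a b hab => em_symm hab
      have hm1 : (m-1) % 2 = 0 := by omega
      have hm1h : (m-1)/2 = h - 1 := by omega
      have hdCjoin : C.head? = some (T (m-1) + {2}) := by
        rw [hC]; by_cases hho : h % 2 = 0
        · rw [if_pos hho, hdC0]
          congr 1
          rw [T_eo hm1 (by omega), hm1h]
          rw [add_comm, Multiset.singleton_add, ← Multiset.replicate_succ]
          congr 1
          omega
        · rw [if_neg hho, List.head?_reverse, glC0]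
          congr 1
          rw [T_odd (show h % 2 = 1 by omega), dbl_add, dbl_singleton,
            T_ee hm1 (by omega), hm1h]
      have glC : C.getLast? = some (T (m+1)) := by
        rw [hC]; by_cases hho : h % 2 = 0
        · rw [if_pos hho, glC0, T_ee hev (by omega), hdiv]
        · rw [if_neg hho, List.getLast?_reverse, hdC0, T_eo hev (by omega), hdiv]
      have Cne : C ≠ [] := by
        intro hc
        rw [hc] at hdCjoin
        simp at hdCjoin
      have Ane : (L m).map (· + {1}) ≠ [] := by
        intro hc
        rw [hc] at hdA
        simp at hdA
      have hL : L (m+1) = (L m).map (· + {1}) ++ C := by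
        rw [L, if_neg hodd, hdiv]
      refine ⟨?_, ?_, ?_, ?_, ?_, (L m).map (· + {1}), C, hL, AllA,
        fun P hP => ((memC P).1 hP).2.2⟩
      · rw [hL]
        exact ndA.append ndC (fun x hx hx' => ((memC x).1 hx').2.2 (AllA x hx))
      · intro P
        rw [hL, List.mem_append, memA, memC P]
        constructor
        · rintro (⟨hs, hb, -⟩ | ⟨hs, hb, -⟩) <;> exact ⟨hs, hb⟩
        · rintro ⟨hs, hb⟩
          by_cases h1 : (1:ℕ) ∈ P
          · exact Or.inl ⟨hs, hb, h1⟩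
          · exact Or.inr ⟨hs, hb, h1⟩
      · rw [hL, List.Chain', List.isChain_append]
        refine ⟨chA, chC, ?_⟩
        intro x hx y hy
        rw [glA] at hx
        rw [hdCjoin] at hy
        simp only [Option.mem_def, Option.some_inj] at hx hy
        subst hx; subst hy
        rw [T_odd hmodd]
        refine ⟨0, Or.inl ?_⟩
        have e1 : ({2^0, 2^0} : Multiset ℕ) = {1} + {1} := by
          rw [pair_eq]; norm_num
        rw [e1, show (2:ℕ)^(0+1) = 2 by norm_num]
        abel
      · rw [hL, List.head?_append_of_ne_nil _ Ane]
        exact hdA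
      · rw [hL, List.getLast?_append_of_ne_nil _ Cne]
        exact glC

end GrayAux

theorem gray_sequence_with_ones_first (n : ℕ) (hn : 0 < n) :
    ∃ L : List (Multiset ℕ),
      L.Nodup ∧
      (∀ P : Multiset ℕ, P ∈ L ↔ P.sum = n ∧ IsBinaryPartition P) ∧
      L.Chain' ElementaryMove ∧
      L.head? = some (Multiset.replicate n 1) ∧
      (∀ i j : Fin L.length, i ≤ j → (1 : ℕ) ∈ L.get j → (1 : ℕ) ∈ L.get i) := by
  obtain ⟨nd, mem, ch, hd, -, A, C, hAC, hA1, hC1⟩ := GrayAux.good n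
  refine ⟨GrayAux.L n, nd, mem, ch, hd, ?_⟩
  intro i j hij hj
  have gi := List.getElem_of_eq hAC i.2
  have gj := List.getElem_of_eq hAC j.2
  by_cases hi : (i : ℕ) < A.length
  · rw [List.get_eq_getElem, gi, List.getElem_append_left hi]
    exact hA1 _ (List.getElem_mem _)
  · exfalso
    have hjge : A.length ≤ (j : ℕ) := le_trans (Nat.le_of_not_lt hi) hij
    have : (GrayAux.L n).get j ∈ C := by
      rw [List.get_eq_getElem, gj, List.getElem_append_right hjge]
      exact List.getElem_mem _
    exact hC1 _ this hj
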